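/- Let p be a prime and R a commutative ring such that p·1_R lies in the Jacobson radical of R. Let 𝒜 ⊆ W(R) be an ideal of the ring of p-typical Witt vectors such that the ideal of R generated by the image w_0(𝒜) of 𝒜 under the zeroth ghost component is all of R. Then 𝒜 = W(R). -/

import Mathlib

namespace WittProofAux

open WittVector Function

variable {p : ℕ} [hp : Fact p.Prime] {R : Type*} [CommRing R]

local notation "𝕎" => WittVector p

lemma coeff_init (n : ℕ) (x : 𝕎 R) (i : ℕ) :
    (init n x).coeff i = if i < n then x.coeff i else 0 := by
  simp [WittVector.init, WittVector.select, WittVector.coeff_mk]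

lemma iterate_verschiebung_coeff_lt (x : 𝕎 R) :
    ∀ n i, i < n → (verschiebung^[n] x).coeff i = 0 := by
  intro n
  induction n with
  | zero => intro i hi; omega
  | succ n ih =>
    intro i hi
    rw [iterate_succ_apply']
    cases i with
    | zero => exact verschiebung_coeff_zero _
    | succ j => rw [verschiebung_coeff_succ]; exact ih j (by omega)

lemma iterate_verschiebung_add (n : ℕ) (x y : 𝕎 R) :
    verschiebung^[n] (x + y) = verschiebung^[n] x + verschiebung^[n] y := by
  induction n with
  | zero => simp
  | succ n ih => simp [iterate_succ_apply', ih, map_add]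

lemma verschiebung_natCast_mul (m : ℕ) (x : 𝕎 R) :
    verschiebung ((m : 𝕎 R) * x) = (m : 𝕎 R) * verschiebung x := by
  rw [← nsmul_eq_mul, ← nsmul_eq_mul, map_nsmul]

lemma iterate_verschiebung_natCast_mul (n m : ℕ) (x : 𝕎 R) :
    verschiebung^[n] ((m : 𝕎 R) * x) = (m : 𝕎 R) * verschiebung^[n] x := by
  induction n with
  | zero => simp
  | succ n ih => rw [iterate_succ_apply', iterate_succ_apply', ih, verschiebung_natCast_mul]

lemma iterate_frobenius_iterate_verschiebung (n : ℕ) (x : 𝕎 R) :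
    frobenius^[n] (verschiebung^[n] x) = x * (p : 𝕎 R) ^ n := by
  induction n generalizing x with
  | zero => simp
  | succ n ih =>
    rw [iterate_succ_apply' (f := verschiebung), iterate_succ_apply (f := frobenius),
      frobenius_verschiebung]
    have : verschiebung^[n] x * (p : 𝕎 R) = verschiebung^[n] (x * (p : 𝕎 R)) := by
      rw [mul_comm, mul_comm x, iterate_verschiebung_natCast_mul]
    rw [this, ih, pow_succ]
    ring

lemma eq_iterate_verschiebung {n : ℕ} {x : 𝕎 R} (h : ∀ i < n, x.coeff i = 0) :
    x = verschiebung^[n] (WittVector.mk p fun i => x.coeff (i + n)) := by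
  ext i
  rcases lt_or_ge i n with hi | hi
  · rw [h i hi, iterate_verschiebung_coeff_lt _ n i hi]
  · obtain ⟨k, rfl⟩ := Nat.exists_eq_add_of_le hi
    rw [add_comm n k, iterate_verschiebung_coeff, WittVector.coeff_mk]


lemma step (hpJ : (p : R) ∈ Ideal.jacobson (⊥ : Ideal R)) (z : 𝕎 R) (n : ℕ) (hn : 1 ≤ n)
    (v : 𝕎 R) (hv : ∀ i < n, (z * v - 1).coeff i = 0) :
    ∃ v', (∀ i < n + 1, (z * v' - 1).coeff i = 0) ∧ ∀ i < n, v'.coeff i = v.coeff i := by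
  classical
  set η := z * v - 1 with hη_def
  set r : 𝕎 R := WittVector.mk p fun i => η.coeff (i + n) with hr_def
  have hη : η = verschiebung^[n] r := eq_iterate_verschiebung hv
  set r0 : R := η.coeff n with hr0_def
  have hr0 : r.coeff 0 = r0 := by rw [hr_def, WittVector.coeff_mk, zero_add]
  -- the unit 1 + p^n * r0
  obtain ⟨m, rfl⟩ : ∃ m, n = m + 1 := ⟨n - 1, by omega⟩
  have hunit : IsUnit (1 + (p : R) ^ (m + 1) * r0) := by
    have := Ideal.mem_jacobson_bot.mp hpJ ((p : R) ^ m * r0)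
    convert this using 1
    ring
  obtain ⟨t, ht⟩ := hunit.exists_right_inv
  set c0 : R := -(r0 * t) with hc0_def
  set c : 𝕎 R := WittVector.teichmuller p c0 with hc_def
  refine ⟨v * (1 + verschiebung^[m + 1] c), ?_, ?_⟩
  · -- main property
    have hexp : z * (v * (1 + verschiebung^[m + 1] c)) - 1 =
        verschiebung^[m + 1] (r + c + r * (c * (p : 𝕎 R) ^ (m + 1))) := by
      have h1 : z * (v * (1 + verschiebung^[m + 1] c)) - 1 =
          η + verschiebung^[m + 1] c + η * verschiebung^[m + 1] c := by
        rw [hη_def]; ring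
      rw [h1, hη, iterate_verschiebung_mul_left,
        iterate_frobenius_iterate_verschiebung,
        ← iterate_verschiebung_add, ← iterate_verschiebung_add]
    intro i hi
    rw [hexp]
    rcases Nat.lt_succ_iff_lt_or_eq.mp hi with hilt | rfl
    · exact iterate_verschiebung_coeff_lt _ _ _ hilt
    · have : (verschiebung^[m + 1] (r + c + r * (c * (p : 𝕎 R) ^ (m + 1)))).coeff (0 + (m + 1)) =
          (r + c + r * (c * (p : 𝕎 R) ^ (m + 1))).coeff 0 := iterate_verschiebung_coeff _ _ _
      rw [zero_add] at this
      rw [this]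
      have hcc : ((r + c + r * (c * (p : 𝕎 R) ^ (m + 1)))).coeff 0 =
          r0 + c0 + r0 * (c0 * (p : R) ^ (m + 1)) := by
        have := WittVector.constantCoeff (p := p) (R := R)
        calc (r + c + r * (c * (p : 𝕎 R) ^ (m + 1))).coeff 0
            = WittVector.constantCoeff (r + c + r * (c * (p : 𝕎 R) ^ (m + 1))) := rfl
          _ = r0 + c0 + r0 * (c0 * (p : R) ^ (m + 1)) := by
              simp only [map_add, map_mul, map_pow, map_natCast]
              simp [WittVector.constantCoeff_apply, hr0, hc_def,
                WittVector.teichmuller_coeff_zero]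
      rw [hcc, hc0_def]
      linear_combination (-r0) * ht
  · -- stability
    intro i hi
    have hinit : WittVector.init (m + 1) (v * (1 + verschiebung^[m + 1] c)) =
        WittVector.init (m + 1) v := by
      have hz : WittVector.init (m + 1) (verschiebung^[m + 1] c) = 0 := by
        ext j
        rw [coeff_init]
        split_ifs with hj
        · rw [iterate_verschiebung_coeff_lt _ _ _ hj, WittVector.zero_coeff]
        · rw [WittVector.zero_coeff]
      calc WittVector.init (m + 1) (v * (1 + verschiebung^[m + 1] c))
          = WittVector.init (m + 1)
            (WittVector.init (m + 1) v * WittVector.init (m + 1) (1 + verschiebung^[m + 1] c)) :=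
            WittVector.init_mul _ _ _
        _ = WittVector.init (m + 1)
            (WittVector.init (m + 1) v * WittVector.init (m + 1) (1 : 𝕎 R)) := by
            rw [WittVector.init_add, hz, add_zero, WittVector.init_init]
        _ = WittVector.init (m + 1) (v * 1) := (WittVector.init_mul _ _ _).symm
        _ = WittVector.init (m + 1) v := by rw [mul_one]
    have := congrArg (fun w => WittVector.coeff w i) hinit
    simpa [coeff_init, hi] using this

lemma isUnit_of_coeff_zero_eq_one (hpJ : (p : R) ∈ Ideal.jacobson (⊥ : Ideal R))
    (z : 𝕎 R) (hz : z.coeff 0 = 1) : IsUnit z := by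
  classical
  choose g hg1 hg2 using step hpJ z
  let f : ℕ → 𝕎 R := fun n => Nat.rec (1 : 𝕎 R)
    (fun m ih => if h : ∀ i < m + 1, (z * ih - 1).coeff i = 0
      then g (m + 1) (Nat.succ_le_succ (Nat.zero_le m)) ih h else ih) n
  have hfs : ∀ m, f (m + 1) = if h : ∀ i < m + 1, (z * f m - 1).coeff i = 0
      then g (m + 1) (Nat.succ_le_succ (Nat.zero_le m)) (f m) h else f m := fun m => rfl
  have key : ∀ n, ∀ i < n + 1, (z * f n - 1).coeff i = 0 := by
    intro n
    induction n with
    | zero =>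
      intro i hi
      obtain rfl : i = 0 := by omega
      have : (z * (1 : 𝕎 R) - 1).coeff 0 = WittVector.constantCoeff (z * 1 - 1) := rfl
      show (z * (1 : 𝕎 R) - 1).coeff 0 = 0
      rw [this, map_sub, map_mul, map_one, mul_one]
      simp [WittVector.constantCoeff_apply, hz]
    | succ n ih =>
      rw [hfs n, dif_pos ih]
      exact hg1 _ _ _ _
  have stab : ∀ m, ∀ i < m + 1, (f (m + 1)).coeff i = (f m).coeff i := by
    intro m i hi
    rw [hfs m, dif_pos (key m)]
    exact hg2 _ _ _ _ i hi
  have chain : ∀ j i, j ≤ i → (f i).coeff j = (f j).coeff j := by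
    intro j i hji
    induction i, hji using Nat.le_induction with
    | base => rfl
    | succ i hji ih => rw [stab i j (by omega), ih]
  set u : 𝕎 R := WittVector.mk p fun i => (f i).coeff i with hu_def
  have hcoeff : ∀ i, (z * u - 1).coeff i = 0 := by
    intro i
    have hinit : WittVector.init (i + 1) u = WittVector.init (i + 1) (f i) := by
      ext j
      rw [coeff_init, coeff_init]
      split_ifs with hj
      · rw [hu_def, WittVector.coeff_mk]
        exact (chain j i (by omega)).symm
      · rfl
    have e0 : WittVector.init (i + 1) (z * u) = WittVector.init (i + 1) (z * f i) := by
      rw [WittVector.init_mul, hinit, ← WittVector.init_mul]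
    have e1 : WittVector.init (i + 1) (z * u - 1) = WittVector.init (i + 1) (z * f i - 1) := by
      rw [WittVector.init_sub, e0, ← WittVector.init_sub]
    have e2 : (z * u - 1).coeff i = (WittVector.init (i + 1) (z * u - 1)).coeff i := by
      rw [coeff_init, if_pos (by omega)]
    rw [e2, e1, coeff_init, if_pos (by omega)]
    exact key i i (by omega)
  have : z * u - 1 = 0 := by ext i; rw [hcoeff i, WittVector.zero_coeff]
  exact IsUnit.of_mul_eq_one u (sub_eq_zero.mp this)

end WittProofAux

/-- Lemma 2.1(i): if `p` lies in the Jacobson radical of `R` and the ideal of `R`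
generated by the image of an ideal `𝒜 ⊆ W(R)` under the zeroth ghost component
is all of `R`, then `𝒜 = W(R)`. -/
theorem witt_ideal_eq_top_of_jacobson
    (p : ℕ) [Fact p.Prime] (R : Type*) [CommRing R]
    (hp : (p : R) ∈ Ideal.jacobson (⊥ : Ideal R))
    (𝒜 : Ideal (WittVector p R))
    (h : Ideal.span ((WittVector.ghostComponent 0 : WittVector p R →+* R) ''
        (𝒜 : Set (WittVector p R))) = ⊤) :
    𝒜 = ⊤ := by
  have hg0 : ∀ x : WittVector p R, WittVector.ghostComponent 0 x = x.coeff 0 := by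
    intro x
    rw [WittVector.ghostComponent_apply, wittPolynomial_zero, MvPolynomial.aeval_X]
  have hsurj : Function.Surjective (WittVector.ghostComponent 0 : WittVector p R →+* R) := by
    intro a
    refine ⟨WittVector.mk p fun i => if i = 0 then a else 0, ?_⟩
    rw [hg0, WittVector.coeff_mk]
    simp
  have h1 : (1 : R) ∈ Ideal.map (WittVector.ghostComponent 0 : WittVector p R →+* R) 𝒜 := by
    show (1 : R) ∈ Ideal.span ((WittVector.ghostComponent 0 : WittVector p R →+* R) ''
        (𝒜 : Set (WittVector p R)))
    rw [h]; trivial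
  obtain ⟨z, hzA, hz1⟩ := (Ideal.mem_map_iff_of_surjective _ hsurj).mp h1
  have hz0 : z.coeff 0 = 1 := by rw [← hg0, hz1]
  exact Ideal.eq_top_of_isUnit_mem 𝒜 hzA
    (WittProofAux.isUnit_of_coeff_zero_eq_one hp z hz0)
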